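/- Let m ≥ 0 and define, at x = 2, α(y) = 1 + (y - 2)·S_{m-1}(y)·(S_m(y) - S_{m-1}(y)) and λ(y) = 4 - y - (y - 2)²·S_m(y)·S_{m-1}(y). Then α(y)² - α(y)·λ(y) + 1 = (y - 2)·((y - 2)·S_m(y)·S_{m-1}(y) + 1)² in ℤ[y]. -/

import Mathlib

open Polynomial in
theorem stmt12 (S : ℤ → Polynomial ℤ) (hS0 : S 0 = 1) (hS1 : S 1 = X)
    (hrec : ∀ i : ℤ, S (i + 1) = X * S i - S (i - 1))
    (m : ℤ) (hm : 0 ≤ m)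
    (α lam : Polynomial ℤ)
    (hα : α = 1 + (X - C 2) * S (m - 1) * (S m - S (m - 1)))
    (hlam : lam = C 4 - X - (X - C 2) ^ 2 * S m * S (m - 1)) :
    α ^ 2 - α * lam + 1 = (X - C 2) * ((X - C 2) * S m * S (m - 1) + 1) ^ 2 := by
  have hSneg : S (-1) = 0 := by
    have h := hrec 0
    norm_num at h
    rw [hS0, hS1] at h
    linear_combination h
  have hinv : ∀ k : ℤ, 0 ≤ k → S k ^ 2 + S (k - 1) ^ 2 - X * S k * S (k - 1) = 1 := by
    intro k
    refine Int.le_induction (motive := fun k _ => S k ^ 2 + S (k - 1) ^ 2 - X * S k * S (k - 1) = 1) ?_ ?_ k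
    · norm_num [hS0, hSneg]
    · intro n _ ih
      have h := hrec n
      rw [show n + 1 - 1 = n by ring]
      linear_combination ih + (S (n + 1) - S (n - 1)) * h
  have h := hinv m hm
  rw [hα, hlam]
  have h2 : (C 2 : Polynomial ℤ) = 2 := by norm_num
  have h4 : (C 4 : Polynomial ℤ) = 4 := by norm_num
  rw [h2, h4]
  linear_combination ((X - 2) ^ 2 * S (m - 1) ^ 2) * h
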